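/- Let q, p, u, v : ℝ → ℝ be functions with q twice differentiable and p, u, v differentiable, satisfying for every s ∈ ℝ: q′(s) = p(s) − q(s)·u(s), p′(s) = s·q(s) − 2·q(s)·v(s) + p(s)·u(s), u′(s) = −q(s)², v′(s) = −p(s)·q(s), and u(s)² − 2·v(s) = q(s)². Then q satisfies the Painlevé II equation: q″(s) = s·q(s) + 2·q(s)³ for all s ∈ ℝ. -/

import Mathlib

/-- Derivation of the Painlevé II equation `q″ = s·q + 2q³` from the first-order system
and the first integral `u² − 2v = q²`. -/
theorem painleve_II_from_system (q p u v : ℝ → ℝ)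
    (hq : Differentiable ℝ q) (hq' : Differentiable ℝ (deriv q))
    (hp : Differentiable ℝ p) (hu : Differentiable ℝ u) (hv : Differentiable ℝ v)
    (hqd : ∀ s : ℝ, deriv q s = p s - q s * u s)
    (hpd : ∀ s : ℝ, deriv p s = s * q s - 2 * q s * v s + p s * u s)
    (hud : ∀ s : ℝ, deriv u s = -(q s) ^ 2)
    (hvd : ∀ s : ℝ, deriv v s = -(p s * q s))
    (hfirst : ∀ s : ℝ, u s ^ 2 - 2 * v s = q s ^ 2) :
    ∀ s : ℝ, deriv (deriv q) s = s * q s + 2 * (q s) ^ 3 := by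
  intro s
  have hfun : deriv q = fun s => p s - q s * u s := funext hqd
  rw [hfun]
  rw [deriv_fun_sub (hp s) ((hq s).fun_mul (hu s)), deriv_fun_mul (hq s) (hu s),
    hpd s, hud s, hqd s]
  have h := hfirst s
  linear_combination q s * h
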